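/- If c : ℕ → Fin r is a finite coloring of the positive integers, then there exist a color i and an infinite set S of positive integers such that every sum of finitely many distinct elements of S has color i. -/

import Mathlib

open Hindman Stream'

/-- Transfer of FS-membership along the coercion `ℕ+ → ℕ`. -/
lemma fs_map_coe {m : ℕ} {a' : Stream' ℕ} (h : m ∈ Hindman.FS a') :
    ∀ a : Stream' ℕ+, a' = Stream'.map (fun p : ℕ+ => (p : ℕ)) a →
      ∃ p ∈ Hindman.FS a, (p : ℕ) = m := by
  induction h with
  | head' a' =>
    intro a ha
    subst ha
    exact ⟨a.head, Hindman.FS.head a, (Stream'.head_map _ a).symm⟩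
  | tail' a' m h ih =>
    intro a ha
    obtain ⟨p, hp, hpm⟩ := ih a.tail (by rw [ha, Stream'.map_tail])
    exact ⟨p, Hindman.FS.tail a p hp, hpm⟩
  | cons' a' m h ih =>
    intro a ha
    obtain ⟨p, hp, hpm⟩ := ih a.tail (by rw [ha, Stream'.map_tail])
    refine ⟨a.head + p, Hindman.FS.cons a p hp, ?_⟩
    rw [ha, Stream'.head_map]
    push_cast
    rw [hpm]

/-- Prefix sums of a stream lie in its FS-set. -/
lemma pfx_mem (k : ℕ) : ∀ a : Stream' ℕ,
    (∑ i ∈ Finset.range (k + 1), a.get i) ∈ Hindman.FS a := by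
  induction k with
  | zero =>
    intro a
    rw [Finset.sum_range_one]
    exact Hindman.FS.head a
  | succ k ih =>
    intro a
    rw [Finset.sum_range_succ']
    have hg : ∀ i, a.get (i + 1) = a.tail.get i := fun i => rfl
    simp only [hg]
    rw [add_comm]
    exact Hindman.FS.cons a _ (ih a.tail)

lemma pfx_gt {a : Stream' ℕ} (hpos : ∀ n, 0 < a.get n) (k : ℕ) :
    k < ∑ i ∈ Finset.range (k + 1), a.get i := by
  calc k < k + 1 := Nat.lt_succ_self k
    _ = ∑ _i ∈ Finset.range (k + 1), 1 := by simp
    _ ≤ ∑ i ∈ Finset.range (k + 1), a.get i :=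
        Finset.sum_le_sum fun i _ => hpos i

/-- State of the recursion: `(hstate a k).1` is a drop amount, `(hstate a k).2` the previous
value of the extracted sequence. -/
noncomputable def hstate (a : Stream' ℕ) : ℕ → ℕ × ℕ
  | 0 => (0, 0)
  | k + 1 =>
    ((hstate a k).1 +
      Classical.choose (Hindman.FS.add (pfx_mem (hstate a k).2 (Stream'.drop (hstate a k).1 a))),
     ∑ i ∈ Finset.range ((hstate a k).2 + 1), (Stream'.drop (hstate a k).1 a).get i)

/-- The extracted sequence. -/
noncomputable def hb (a : Stream' ℕ) (k : ℕ) : ℕ :=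
  ∑ i ∈ Finset.range ((hstate a k).2 + 1), (Stream'.drop (hstate a k).1 a).get i

lemma hstate_snd_succ (a : Stream' ℕ) (k : ℕ) : (hstate a (k + 1)).2 = hb a k := rfl

lemma hb_mem_fs (a : Stream' ℕ) (k : ℕ) :
    hb a k ∈ Hindman.FS (Stream'.drop (hstate a k).1 a) :=
  pfx_mem _ _

lemma hN_le_succ (a : Stream' ℕ) (k : ℕ) : (hstate a k).1 ≤ (hstate a (k + 1)).1 :=
  Nat.le_add_right _ _

lemma hN_mono (a : Stream' ℕ) : Monotone fun k => (hstate a k).1 :=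
  monotone_nat_of_le_succ (hN_le_succ a)

lemma fs_drop_mono (a : Stream' ℕ) {m n : ℕ} (h : m ≤ n) :
    Hindman.FS (Stream'.drop n a) ⊆ Hindman.FS (Stream'.drop m a) := by
  obtain ⟨d, rfl⟩ := Nat.exists_eq_add_of_le h
  rw [← Stream'.drop_drop d m a]
  exact Hindman.FS_iter_tail_sub_FS _ d

lemma hb_key (a : Stream' ℕ) (k : ℕ) :
    ∀ m' ∈ Hindman.FS (Stream'.drop (hstate a (k + 1)).1 a),
      hb a k + m' ∈ Hindman.FS (Stream'.drop (hstate a k).1 a) := by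
  intro m' hm'
  have hspec := Classical.choose_spec
    (Hindman.FS.add (pfx_mem (hstate a k).2 (Stream'.drop (hstate a k).1 a)))
  apply hspec
  rw [Stream'.drop_drop]
  have heq : (hstate a (k + 1)).1 = (hstate a k).1 +
      Classical.choose
        (Hindman.FS.add (pfx_mem (hstate a k).2 (Stream'.drop (hstate a k).1 a))) := rfl
  rw [heq] at hm'
  exact hm'

lemma hb_strictMono (a : Stream' ℕ) (hpos : ∀ n, 0 < a.get n) : StrictMono (hb a) := by
  apply strictMono_nat_of_lt_succ
  intro k
  have hpos' : ∀ n, 0 < (Stream'.drop (hstate a (k + 1)).1 a).get n := by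
    intro n; rw [Stream'.get_drop]; exact hpos _
  have h := pfx_gt hpos' (hstate a (k + 1)).2
  rw [hstate_snd_succ] at h
  exact h

/-- Sums of the extracted sequence over a finset lie in the appropriate FS-set. -/
lemma hb_sum (a : Stream' ℕ) :
    ∀ s : Finset ℕ, ∀ hs : s.Nonempty,
      (∑ k ∈ s, hb a k) ∈ Hindman.FS (Stream'.drop (hstate a (s.min' hs)).1 a) := by
  intro s
  induction s using Finset.strongInduction with
  | _ s ih =>
    intro hs
    rw [← Finset.add_sum_erase _ _ (s.min'_mem hs)]
    rcases (s.erase (s.min' hs)).eq_empty_or_nonempty with h | h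
    · rw [h, Finset.sum_empty, add_zero]
      exact hb_mem_fs a _
    · apply hb_key a (s.min' hs)
      have hrec := ih _ (Finset.erase_ssubset (s.min'_mem hs)) h
      have hle : s.min' hs + 1 ≤ (s.erase (s.min' hs)).min' h :=
        Nat.succ_le_of_lt (Finset.min'_lt_of_mem_erase_min' _ _ (Finset.min'_mem _ _))
      exact fs_drop_mono a (hN_mono a hle) hrec

/-- Hindman's Theorem: for every finite coloring of the positive integers there are a
color `i` and an infinite set `S` of positive integers such that every sum of finitely
many distinct elements of `S` has color `i`. -/
theorem hindman (r : ℕ) (c : ℕ → Fin r) :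
    ∃ (i : Fin r) (S : Set ℕ), S.Infinite ∧ (∀ n ∈ S, 0 < n) ∧
      ∀ F : Finset ℕ, ↑F ⊆ S → F.Nonempty → c (∑ n ∈ F, n) = i := by
  cases r with
  | zero => exact (c 1).elim0
  | succ r =>
    obtain ⟨C, ⟨i, rfl⟩, a, ha⟩ :=
      Hindman.exists_FS_of_finite_cover
        (Set.range fun i : Fin (r + 1) => {n : ℕ+ | c n = i})
        (Set.finite_range _)
        (by
          intro n _
          exact ⟨_, ⟨c n, rfl⟩, rfl⟩)
    set aN : Stream' ℕ := Stream'.map (fun p : ℕ+ => (p : ℕ)) a with haN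
    have hposN : ∀ n, 0 < aN.get n := by
      intro n
      have hg : aN.get n = ((a.get n : ℕ+) : ℕ) := by rw [haN, Stream'.get_map]
      rw [hg]; exact (a.get n).pos
    have hFSN : ∀ m ∈ Hindman.FS aN, 0 < m ∧ c m = i := by
      intro m hm
      obtain ⟨p, hp, rfl⟩ := fs_map_coe hm a rfl
      exact ⟨p.pos, ha hp⟩
    have hmono : StrictMono (hb aN) := hb_strictMono aN hposN
    have hbFS : ∀ k, hb aN k ∈ Hindman.FS aN := fun k =>
      Hindman.FS_iter_tail_sub_FS aN _ (hb_mem_fs aN k)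
    refine ⟨i, Set.range (hb aN), Set.infinite_range_of_injective hmono.injective, ?_, ?_⟩
    · rintro n ⟨k, rfl⟩
      exact (hFSN _ (hbFS k)).1
    · intro F hF hFne
      have hFr : ↑F ⊆ Set.range (hb aN) := hF
      set s : Finset ℕ := F.preimage (hb aN) (hmono.injective.injOn) with hs
      have hsum : ∑ k ∈ s, hb aN k = ∑ n ∈ F, n := Finset.sum_preimage (hb aN) F
        (hmono.injective.injOn) (fun n => n)
        (fun x hx hnx => absurd (hFr hx) hnx)
      obtain ⟨n, hn⟩ := hFne
      obtain ⟨k, rfl⟩ := hFr hn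
      have hsne : s.Nonempty := ⟨k, by simp [hs, hn]⟩
      have hmem := hb_sum aN s hsne
      rw [hsum] at hmem
      exact (hFSN _ (Hindman.FS_iter_tail_sub_FS aN _ hmem)).2
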